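/- Let P and B be orthogonal projections on a Hilbert space, and let ψ₁,…,ψₙ be unit vectors satisfying ‖(Id − PBP)ψ_ν‖ ≤ 3ε for all ν and |⟨ψ_ν,ψ_μ⟩| ≤ ε for ν ≠ μ, with εn < 1/2. Then for every nonzero ψ in the span of ψ₁,…,ψₙ, one has ‖PBPψ‖/‖ψ‖ ≥ 1 − 3ε n^{1/2}(1 − nε)^{−1/2} ≥ 1 − 5ε n^{1/2}. -/

import Mathlib

open scoped InnerProductSpace

open Finset in
private lemma stmt4_aux {H : Type*} [NormedAddCommGroup H] [InnerProductSpace ℂ H]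
    (n : ℕ) (ψ : Fin n → H) (ε : ℝ) (hε : 0 ≤ ε)
    (hunit : ∀ ν, ‖ψ ν‖ = 1)
    (hsmall : ∀ ν μ, ν ≠ μ → ‖(⟪ψ ν, ψ μ⟫_ℂ : ℂ)‖ ≤ ε)
    (a : Fin n → ℂ) :
    (1 - n * ε) * (∑ i, ‖a i‖ ^ 2) ≤ ‖∑ i, a i • ψ i‖ ^ 2 := by
  set v := ∑ i, a i • ψ i with hv
  set S : ℝ := ∑ i, ‖a i‖ ^ 2 with hS
  have hSnn : (0:ℝ) ≤ S := Finset.sum_nonneg fun i _ => sq_nonneg _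
  have hinner : ⟪v, v⟫_ℂ =
      ∑ i, ∑ j, (starRingEnd ℂ) (a i) * (a j * ⟪ψ i, ψ j⟫_ℂ) := by
    rw [hv, sum_inner]
    refine Finset.sum_congr rfl fun i _ => ?_
    rw [inner_smul_left, inner_sum]
    rw [Finset.mul_sum]
    refine Finset.sum_congr rfl fun j _ => ?_
    rw [inner_smul_right]
  have hdiag : ∀ i : Fin n, (starRingEnd ℂ) (a i) * (a i * ⟪ψ i, ψ i⟫_ℂ)
      = ((‖a i‖ ^ 2 : ℝ) : ℂ) := by
    intro i
    rw [inner_self_eq_norm_sq_to_K, hunit i]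
    push_cast
    rw [one_pow, mul_one, RCLike.conj_mul]
    norm_cast
  have hsplit : ⟪v, v⟫_ℂ = (S : ℂ) +
      ∑ i, ∑ j ∈ Finset.univ.erase i, (starRingEnd ℂ) (a i) * (a j * ⟪ψ i, ψ j⟫_ℂ) := by
    rw [hinner]
    have : ∀ i : Fin n, ∑ j, (starRingEnd ℂ) (a i) * (a j * ⟪ψ i, ψ j⟫_ℂ)
        = ((‖a i‖ ^ 2 : ℝ) : ℂ) + ∑ j ∈ Finset.univ.erase i,
            (starRingEnd ℂ) (a i) * (a j * ⟪ψ i, ψ j⟫_ℂ) := by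
      intro i
      rw [← hdiag i]
      exact (Finset.add_sum_erase Finset.univ
        (fun j => (starRingEnd ℂ) (a i) * (a j * ⟪ψ i, ψ j⟫_ℂ)) (Finset.mem_univ i)).symm
    rw [Finset.sum_congr rfl fun i _ => this i, Finset.sum_add_distrib]
    congr 1
    rw [hS]; push_cast; rfl
  -- bound the off-diagonal part
  have hoff : ‖∑ i, ∑ j ∈ Finset.univ.erase i,
      (starRingEnd ℂ) (a i) * (a j * ⟪ψ i, ψ j⟫_ℂ)‖ ≤ ε * (n * S) := by
    calc ‖∑ i, ∑ j ∈ Finset.univ.erase i,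
        (starRingEnd ℂ) (a i) * (a j * ⟪ψ i, ψ j⟫_ℂ)‖
        ≤ ∑ i, ∑ j ∈ Finset.univ.erase i, ‖a i‖ * (‖a j‖ * ε) := by
          refine (norm_sum_le _ _).trans (Finset.sum_le_sum fun i _ => ?_)
          refine (norm_sum_le _ _).trans (Finset.sum_le_sum fun j hj => ?_)
          rw [norm_mul, norm_mul, RingHomIsometric.norm_map]
          have hij : i ≠ j := fun h => (Finset.mem_erase.mp hj).1 h.symm
          exact mul_le_mul_of_nonneg_left
            (mul_le_mul_of_nonneg_left (hsmall i j hij) (norm_nonneg _)) (norm_nonneg _)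
      _ ≤ ∑ i : Fin n, ‖a i‖ * ((∑ j, ‖a j‖) * ε) := by
          refine Finset.sum_le_sum fun i _ => ?_
          rw [← Finset.mul_sum]
          refine mul_le_mul_of_nonneg_left ?_ (norm_nonneg _)
          rw [Finset.sum_mul]
          exact Finset.sum_le_sum_of_subset_of_nonneg (Finset.erase_subset _ _)
            (fun j _ _ => by positivity)
      _ = (∑ i, ‖a i‖) ^ 2 * ε := by rw [← Finset.sum_mul]; ring
      _ ≤ ((n : ℝ) * S) * ε := by
          refine mul_le_mul_of_nonneg_right ?_ hε
          have := sq_sum_le_card_mul_sum_sq (s := (Finset.univ : Finset (Fin n)))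
            (f := fun i => ‖a i‖)
          simpa [hS] using this
      _ = ε * (n * S) := by ring
  have hvv : ⟪v, v⟫_ℂ = ((‖v‖ ^ 2 : ℝ) : ℂ) := by
    rw [inner_self_eq_norm_sq_to_K]; norm_cast
  have key : S - ‖v‖ ^ 2 ≤ ε * (n * S) := by
    have h1 : ‖(S : ℂ) - ((‖v‖ ^ 2 : ℝ) : ℂ)‖ ≤ ε * (n * S) := by
      have : (S : ℂ) - ((‖v‖ ^ 2 : ℝ) : ℂ) = -(∑ i, ∑ j ∈ Finset.univ.erase i,
          (starRingEnd ℂ) (a i) * (a j * ⟪ψ i, ψ j⟫_ℂ)) := by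
        rw [← hvv, hsplit]; ring
      rw [this, norm_neg]; exact hoff
    have h2 : ‖(S : ℂ) - ((‖v‖ ^ 2 : ℝ) : ℂ)‖ = |S - ‖v‖ ^ 2| := by
      rw [← Complex.ofReal_sub, Complex.norm_real, Real.norm_eq_abs]
    calc S - ‖v‖ ^ 2 ≤ |S - ‖v‖ ^ 2| := le_abs_self _
      _ ≤ ε * (n * S) := by rw [← h2]; exact h1
  nlinarith [key]

/-- For orthogonal projections `P, B` and almost-orthogonal unit vectors
`ψ₁,…,ψₙ` with `‖(Id − PBP)ψν‖ ≤ 3ε` and `εn < 1/2`, every nonzero `ψ` in the span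
satisfies `‖PBPψ‖/‖ψ‖ ≥ 1 − 3εn^{1/2}(1−nε)^{−1/2} ≥ 1 − 5εn^{1/2}`. -/
theorem stmt4 {H : Type*} [NormedAddCommGroup H] [InnerProductSpace ℂ H] [CompleteSpace H]
    (P B : H →L[ℂ] H)
    (hPsa : IsSelfAdjoint P) (hPidem : P ∘L P = P)
    (hBsa : IsSelfAdjoint B) (hBidem : B ∘L B = B)
    (n : ℕ) (ψ : Fin n → H) (ε : ℝ) (hε : 0 ≤ ε)
    (hunit : ∀ ν, ‖ψ ν‖ = 1)
    (hconc : ∀ ν, ‖ψ ν - P (B (P (ψ ν)))‖ ≤ 3 * ε)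
    (hsmall : ∀ ν μ, ν ≠ μ → ‖(⟪ψ ν, ψ μ⟫_ℂ : ℂ)‖ ≤ ε)
    (hεn : ε * n < 1 / 2) :
    ∀ v ∈ Submodule.span ℂ (Set.range ψ), v ≠ 0 →
      1 - 3 * ε * Real.sqrt n * (1 - n * ε) ^ (-(1:ℝ)/2) ≤ ‖P (B (P v))‖ / ‖v‖ ∧
      1 - 5 * ε * Real.sqrt n ≤ 1 - 3 * ε * Real.sqrt n * (1 - n * ε) ^ (-(1:ℝ)/2) := by
  intro v hv hv0
  obtain ⟨a, ha⟩ := (Submodule.mem_span_range_iff_exists_fun ℂ).mp hv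
  set S : ℝ := ∑ i, ‖a i‖ ^ 2 with hS
  have hSnn : (0:ℝ) ≤ S := Finset.sum_nonneg fun i _ => sq_nonneg _
  have hvpos : (0:ℝ) < ‖v‖ := norm_pos_iff.mpr hv0
  set t : ℝ := 1 - n * ε with ht
  have htpos : 0 < t := by
    have : ε * n < 1/2 := hεn
    have : (0:ℝ) ≤ (n:ℝ) := Nat.cast_nonneg n
    nlinarith [hεn]
  have hlow : t * S ≤ ‖v‖ ^ 2 := by
    have := stmt4_aux n ψ ε hε hunit hsmall a
    rw [ha] at this
    exact this
  -- ‖v - PBP v‖ ≤ 3 ε ∑ ‖a i‖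
  have hdiff : ‖v - P (B (P v))‖ ≤ 3 * ε * ∑ i, ‖a i‖ := by
    have hrepr : v - P (B (P v)) = ∑ i, a i • (ψ i - P (B (P (ψ i)))) := by
      rw [← ha]
      rw [map_sum, map_sum, map_sum]
      rw [← Finset.sum_sub_distrib]
      refine Finset.sum_congr rfl fun i _ => ?_
      rw [map_smul, map_smul, map_smul, smul_sub]
    rw [hrepr]
    calc ‖∑ i, a i • (ψ i - P (B (P (ψ i))))‖
        ≤ ∑ i, ‖a i • (ψ i - P (B (P (ψ i))))‖ := norm_sum_le _ _
      _ ≤ ∑ i, ‖a i‖ * (3 * ε) := by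
          refine Finset.sum_le_sum fun i _ => ?_
          rw [norm_smul]
          exact mul_le_mul_of_nonneg_left (hconc i) (norm_nonneg _)
      _ = 3 * ε * ∑ i, ‖a i‖ := by rw [← Finset.sum_mul]; ring
  have hsum1 : ∑ i, ‖a i‖ ≤ Real.sqrt n * Real.sqrt S := by
    rw [← Real.sqrt_mul (Nat.cast_nonneg n)]
    rw [Real.le_sqrt (Finset.sum_nonneg fun i _ => norm_nonneg _)
      (by positivity)]
    have := sq_sum_le_card_mul_sum_sq (s := (Finset.univ : Finset (Fin n)))
      (f := fun i => ‖a i‖)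
    simpa [hS] using this
  have hPBP : ‖v‖ - 3 * ε * (Real.sqrt n * Real.sqrt S) ≤ ‖P (B (P v))‖ := by
    have h1 : ‖v‖ ≤ ‖v - P (B (P v))‖ + ‖P (B (P v))‖ := by
      have := norm_sub_norm_le (v) (P (B (P v)))
      nlinarith [norm_sub_norm_le v (P (B (P v))), norm_nonneg (v - P (B (P v)))]
    have h2 : ‖v - P (B (P v))‖ ≤ 3 * ε * (Real.sqrt n * Real.sqrt S) := by
      refine hdiff.trans ?_
      have := mul_le_mul_of_nonneg_left hsum1 (by positivity : (0:ℝ) ≤ 3 * ε)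
      linarith
    linarith
  have hrpow : t ^ (-(1:ℝ)/2) = (Real.sqrt t)⁻¹ := by
    rw [show (-(1:ℝ)/2) = -(1/2) by ring, Real.rpow_neg htpos.le, Real.sqrt_eq_rpow]
  have hsqtpos : 0 < Real.sqrt t := Real.sqrt_pos.mpr htpos
  have hsqS : Real.sqrt S ≤ ‖v‖ * (Real.sqrt t)⁻¹ := by
    rw [← div_eq_mul_inv, le_div_iff₀ hsqtpos, mul_comm]
    rw [← Real.sqrt_mul htpos.le]
    exact Real.sqrt_le_sqrt hlow |>.trans_eq (Real.sqrt_sq hvpos.le)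
  constructor
  · rw [hrpow, le_div_iff₀ hvpos]
    have h3 : 3 * ε * Real.sqrt n * Real.sqrt S
        ≤ 3 * ε * Real.sqrt n * (‖v‖ * (Real.sqrt t)⁻¹) :=
      mul_le_mul_of_nonneg_left hsqS (by positivity)
    nlinarith [hPBP, h3]
  · rw [hrpow]
    have h35 : (3/5 : ℝ) ≤ Real.sqrt t := by
      rw [Real.le_sqrt (by norm_num : (0:ℝ) ≤ 3/5) htpos.le]
      have : (0:ℝ) ≤ (n:ℝ) := Nat.cast_nonneg n
      nlinarith [hεn]
    have hinv : (Real.sqrt t)⁻¹ ≤ 5/3 := by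
      rw [inv_le_comm₀ (by linarith) (by norm_num)]
      linarith
    have hnn : 0 ≤ ε * Real.sqrt n := by positivity
    nlinarith [hinv, hnn, hsqtpos]
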